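/- Inversion of a terminating very-well-poised series. Let n ∈ ℕ, r ∈ ℕ with r ≥ 4, q, z, b, a₅,…,a_{r+1} ∈ ℂ all nonzero with |q| ≠ 1, with a fixed square root √b chosen, and assume every q-Pochhammer symbol appearing in a denominator below is nonzero. Then ₍r+1₎W_r(b; q^{-n}, a₅,…,a_{r+1}; q, z) = q^{−n(n−1)/2} (−z/q)^n · (q√b, −q√b, b, a₅,…,a_{r+1}; q)_n / (√b, −√b, q^{n+1}b, qb/a₅, …, qb/a_{r+1}; q)_n · ₍r+1₎W_r(q^{−2n}/b; q^{-n}, q^{-n}a₅/b, …, q^{-n}a_{r+1}/b; q, q^{2n+r−3} b^{r−3} / ((a₅⋯a_{r+1})² z)). -/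

import Mathlib

open Finset

/-- The `q`-Pochhammer symbol `(a;q)_n := ∏_{j=0}^{n-1} (1 - a q^j)`. -/
noncomputable def qPoch (a q : ℂ) (n : ℕ) : ℂ :=
  ∏ j ∈ Finset.range n, (1 - a * q ^ j)

/-- The terminating basic hypergeometric series
`₍r+1₎φ_r(q^{-n}, as; bs; q, z)`. -/
noncomputable def phi (n : ℕ) (as bs : List ℂ) (q z : ℂ) : ℂ :=
  ∑ k ∈ Finset.range (n + 1),
    ((q ^ (-(n : ℤ)) :: as).map fun a => qPoch a q k).prod /
      ((q :: bs).map fun b => qPoch b q k).prod * z ^ k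

lemma qPoch_succ (a q : ℂ) (k : ℕ) : qPoch a q (k+1) = qPoch a q k * (1 - a * q ^ k) :=
  Finset.prod_range_succ _ k

noncomputable def Lterm (n m : ℕ) (q z b sb QN : ℂ) (A : Fin m → ℂ) (k : ℕ) : ℂ :=
  z^k * (qPoch QN q k * qPoch b q k * qPoch (q*sb) q k * qPoch (-(q*sb)) q k * ∏ i, qPoch (A i) q k) /
    (qPoch q q k * qPoch sb q k * qPoch (-sb) q k * qPoch (q^(n+1)*b) q k * ∏ i, qPoch (q*b/A i) q k)

lemma Lterm_zero (n m : ℕ) (q z b sb QN : ℂ) (A : Fin m → ℂ) :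
    Lterm n m q z b sb QN A 0 = 1 := by
  simp [Lterm, qPoch]

lemma Lterm_succ (n m : ℕ) (q z b sb QN : ℂ) (A : Fin m → ℂ) (t : ℕ) :
    Lterm n m q z b sb QN A (t+1)
    = Lterm n m q z b sb QN A t *
      (z * ((1 - QN*q^t) * (1 - b*q^t) * (1 - q*sb*q^t) * (1 - -(q*sb)*q^t) * ∏ i, (1 - A i*q^t)) /
        ((1 - q*q^t) * (1 - sb*q^t) * (1 - -sb*q^t) * (1 - q^(n+1)*b*q^t) * ∏ i, (1 - q*b/A i*q^t))) := by
  unfold Lterm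
  rw [div_mul_div_comm]
  congr 1
  · simp only [qPoch_succ, Finset.prod_mul_distrib, pow_succ]; ring
  · simp only [qPoch_succ, Finset.prod_mul_distrib]; ring

lemma flip_fact {u v : ℂ} (h : u * v = 1) : 1 - u = -u * (1 - v) := by linear_combination -h

lemma prod_const_div {m : ℕ} (c : ℂ) (A : Fin m → ℂ) :
    ∏ i, (c / A i) = c^m / ∏ i, A i := by
  rw [Finset.prod_div_distrib, Finset.prod_const, card_univ, Fintype.card_fin]

lemma cross (m j k : ℕ) (q z b sb sb' : ℂ) (A : Fin m → ℂ)
    (hq : q ≠ 0) (hb : b ≠ 0) (hz : z ≠ 0) (hA : ∀ i, A i ≠ 0)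
    (hsb : sb ^ 2 = b) (hsb' : sb' ^ 2 = 1/(q^(j+k+1)*q^(j+k+1)*b))
    (hdL : (1 - q*q^k) * (1 - sb*q^k) * (1 - -sb*q^k) * (1 - q^(j+k+1+1)*b*q^k) *
      ∏ i, (1 - q*b/A i*q^k) ≠ 0)
    (hdS : (1 - q*q^j) * (1 - sb'*q^j) * (1 - -sb'*q^j) *
      (1 - q^(j+k+1+1)*(1/(q^(j+k+1)*q^(j+k+1)*b))*q^j) *
      ∏ i, (1 - q*(1/(q^(j+k+1)*q^(j+k+1)*b))/(A i/(q^(j+k+1)*b))*q^j) ≠ 0) :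
    (z * ((1 - (1/q^(j+k+1))*q^k) * (1 - b*q^k) * (1 - q*sb*q^k) * (1 - -(q*sb)*q^k) *
        ∏ i, (1 - A i*q^k)) /
      ((1 - q*q^k) * (1 - sb*q^k) * (1 - -sb*q^k) * (1 - q^(j+k+1+1)*b*q^k) *
        ∏ i, (1 - q*b/A i*q^k))) *
    ((q^(2*(j+k+1)+m)*b^m/((∏ i, A i)^2*z)) *
      ((1 - (1/q^(j+k+1))*q^j) * (1 - (1/(q^(j+k+1)*q^(j+k+1)*b))*q^j) *
       (1 - q*sb'*q^j) * (1 - -(q*sb')*q^j) *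
        ∏ i, (1 - (A i/(q^(j+k+1)*b))*q^j)) /
      ((1 - q*q^j) * (1 - sb'*q^j) * (1 - -sb'*q^j) *
       (1 - q^(j+k+1+1)*(1/(q^(j+k+1)*q^(j+k+1)*b))*q^j) *
        ∏ i, (1 - q*(1/(q^(j+k+1)*q^(j+k+1)*b))/(A i/(q^(j+k+1)*b))*q^j))) = 1 := by
  have hP : (∏ i, A i) ≠ 0 := Finset.prod_ne_zero_iff.2 (fun i _ => hA i)
  rw [div_mul_div_comm, div_eq_one_iff_eq (mul_ne_zero hdL hdS)]
  have e1 : (1 - q*q^k) = -(q*q^k) * (1 - (1/q^(j+k+1))*q^j) := by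
    apply flip_fact; field_simp; ring
  have e2 : (1 - sb*q^k) * (1 - -sb*q^k)
      = -(b*(q^k*q^k)) * ((1 - q*sb'*q^j) * (1 - -(q*sb')*q^j)) := by
    have l1 : (1 - sb*q^k) * (1 - -sb*q^k) = 1 - b*(q^k*q^k) := by rw [← hsb]; ring
    have l2 : (1 - q*sb'*q^j) * (1 - -(q*sb')*q^j)
        = 1 - (q*q*(1/(q^(j+k+1)*q^(j+k+1)*b)))*(q^j*q^j) := by rw [← hsb']; ring
    rw [l1, l2]; apply flip_fact; field_simp; ring
  have e3 : (1 - q^(j+k+1+1)*b*q^k)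
      = -(q^(j+k+1+1)*b*q^k) * (1 - (1/(q^(j+k+1)*q^(j+k+1)*b))*q^j) := by
    apply flip_fact; field_simp; ring
  have e4 : (∏ i, (1 - q*b/A i*q^k))
      = ((-(q*b*q^k))^m / ∏ i, A i) * ∏ i, (1 - (A i/(q^(j+k+1)*b))*q^j) := by
    rw [← prod_const_div, ← Finset.prod_mul_distrib]
    refine Finset.prod_congr rfl fun i _ => ?_
    field_simp [hA i]
    ring
  have d1 : (1 - q*q^j) = -(q*q^j) * (1 - (1/q^(j+k+1))*q^k) := by
    apply flip_fact; field_simp; ring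
  have d2 : (1 - sb'*q^j) * (1 - -sb'*q^j)
      = -((1/(q^(j+k+1)*q^(j+k+1)*b))*(q^j*q^j)) * ((1 - q*sb*q^k) * (1 - -(q*sb)*q^k)) := by
    have l1 : (1 - sb'*q^j) * (1 - -sb'*q^j) = 1 - (1/(q^(j+k+1)*q^(j+k+1)*b))*(q^j*q^j) := by
      rw [← hsb']; ring
    have l2 : (1 - q*sb*q^k) * (1 - -(q*sb)*q^k) = 1 - (q*q*b)*(q^k*q^k) := by
      rw [← hsb]; ring
    rw [l1, l2]; apply flip_fact; field_simp; ring
  have d3 : (1 - q^(j+k+1+1)*(1/(q^(j+k+1)*q^(j+k+1)*b))*q^j)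
      = -(q^(j+k+1+1)*(1/(q^(j+k+1)*q^(j+k+1)*b))*q^j) * (1 - b*q^k) := by
    apply flip_fact; field_simp; ring
  have hc : ∀ i : Fin m, q*(1/(q^(j+k+1)*q^(j+k+1)*b))/(A i/(q^(j+k+1)*b))
      = q/(q^(j+k+1)*A i) := fun i => by
    rw [mul_one_div, div_div_div_eq, div_eq_div_iff
      (by exact mul_ne_zero (mul_ne_zero (mul_ne_zero (pow_ne_zero _ hq) (pow_ne_zero _ hq)) hb) (hA i))
      (mul_ne_zero (pow_ne_zero _ hq) (hA i))]
    ring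
  have d4 : (∏ i, (1 - q*(1/(q^(j+k+1)*q^(j+k+1)*b))/(A i/(q^(j+k+1)*b))*q^j))
      = ((-(q*q^j/q^(j+k+1)))^m / ∏ i, A i) * ∏ i, (1 - A i*q^k) := by
    rw [← prod_const_div, ← Finset.prod_mul_distrib]
    refine Finset.prod_congr rfl fun i _ => ?_
    rw [hc i]
    field_simp [hA i]
    ring
  rw [show (1 - q*q^k) * (1 - sb*q^k) * (1 - -sb*q^k) * (1 - q^(j+k+1+1)*b*q^k) *
      (∏ i, (1 - q*b/A i*q^k))
    = (1 - q*q^k) * ((1 - sb*q^k) * (1 - -sb*q^k)) * (1 - q^(j+k+1+1)*b*q^k) *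
      (∏ i, (1 - q*b/A i*q^k)) from by ring]
  rw [show (1 - q*q^j) * (1 - sb'*q^j) * (1 - -sb'*q^j) *
      (1 - q^(j+k+1+1)*(1/(q^(j+k+1)*q^(j+k+1)*b))*q^j) *
      (∏ i, (1 - q*(1/(q^(j+k+1)*q^(j+k+1)*b))/(A i/(q^(j+k+1)*b))*q^j))
    = (1 - q*q^j) * ((1 - sb'*q^j) * (1 - -sb'*q^j)) *
      (1 - q^(j+k+1+1)*(1/(q^(j+k+1)*q^(j+k+1)*b))*q^j) *
      (∏ i, (1 - q*(1/(q^(j+k+1)*q^(j+k+1)*b))/(A i/(q^(j+k+1)*b))*q^j)) from by ring]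
  rw [e1, e2, e3, e4, d1, d2, d3, d4]
  have hSc : z * (q^(2*(j+k+1)+m)*b^m/((∏ i, A i)^2*z))
      = ((-(q*q^k)) * (-(b*(q^k*q^k))) * (-(q^(j+k+1+1)*b*q^k)) * ((-(q*b*q^k))^m / ∏ i, A i))
      * ((-(q*q^j)) * (-(1/(q^(j+k+1)*q^(j+k+1)*b)*(q^j*q^j)))
        * (-(q^(j+k+1+1)*(1/(q^(j+k+1)*q^(j+k+1)*b))*q^j)) * ((-(q*q^j/q^(j+k+1)))^m / ∏ i, A i)) := by
    rw [show ((-(q*q^k)) * (-(b*(q^k*q^k))) * (-(q^(j+k+1+1)*b*q^k)) * ((-(q*b*q^k))^m / ∏ i, A i))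
      * ((-(q*q^j)) * (-(1/(q^(j+k+1)*q^(j+k+1)*b)*(q^j*q^j)))
        * (-(q^(j+k+1+1)*(1/(q^(j+k+1)*q^(j+k+1)*b))*q^j)) * ((-(q*q^j/q^(j+k+1)))^m / ∏ i, A i))
      = ((-(q*b*q^k))^m * (-(q*q^j/q^(j+k+1)))^m)
        * ((q*q^k) * (b*(q^k*q^k)) * (q^(j+k+1+1)*b*q^k) * (q*q^j)
          * (1/(q^(j+k+1)*q^(j+k+1)*b)*(q^j*q^j)) * (q^(j+k+1+1)*(1/(q^(j+k+1)*q^(j+k+1)*b))*q^j))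
          / ((∏ i, A i) * (∏ i, A i)) from by ring]
    rw [← mul_pow, neg_mul_neg, show q*b*q^k*(q*q^j/q^(j+k+1)) = q*b from by
      field_simp; ring]
    field_simp
    ring
  linear_combination ((1 - 1/q^(j+k+1)*q^k) * (1 - b*q^k) * (1 - q*sb*q^k) * (1 - -(q*sb)*q^k)
      * (∏ i, (1 - A i*q^k)) * (1 - 1/q^(j+k+1)*q^j) * (1 - 1/(q^(j+k+1)*q^(j+k+1)*b)*q^j)
      * (1 - q*sb'*q^j) * (1 - -(q*sb')*q^j) * (∏ i, (1 - A i/(q^(j+k+1)*b)*q^j))) * hSc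


lemma aux (n m : ℕ) (q z z' b sb b' sb' QN : ℂ) (A A' : Fin m → ℂ)
    (hq : q ≠ 0) (hb : b ≠ 0) (hz : z ≠ 0) (hA : ∀ i, A i ≠ 0)
    (hsb : sb ^ 2 = b) (hsb' : sb' ^ 2 = 1/(q^n*q^n*b))
    (hQN : QN = 1/q^n) (hb' : b' = 1/(q^n*q^n*b))
    (hA' : ∀ i, A' i = A i/(q^n*b))
    (hz' : z' = q^(2*n+m)*b^m/((∏ i, A i)^2*z))
    (hdL : ∀ t, t ≤ n → qPoch q q t * qPoch sb q t * qPoch (-sb) q t * qPoch (q^(n+1)*b) q t *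
      (∏ i, qPoch (q*b/A i) q t) ≠ 0)
    (hdS : ∀ t, t ≤ n → qPoch q q t * qPoch sb' q t * qPoch (-sb') q t * qPoch (q^(n+1)*b') q t *
      (∏ i, qPoch (q*b'/A' i) q t) ≠ 0) :
    ∑ k ∈ Finset.range (n+1), Lterm n m q z b sb QN A k
      = Lterm n m q z b sb QN A n * ∑ k ∈ Finset.range (n+1), Lterm n m q z' b' sb' QN A' k := by
  subst hQN; subst hb'; subst hz'
  have hfacL : ∀ t, t < n → (1 - q*q^t) * (1 - sb*q^t) * (1 - -sb*q^t) * (1 - q^(n+1)*b*q^t) *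
      (∏ i, (1 - q*b/A i*q^t)) ≠ 0 := by
    intro t ht h0
    refine hdL (t+1) (by omega) ?_
    simp only [qPoch_succ, Finset.prod_mul_distrib]
    rw [show (qPoch q q t * (1 - q*q^t)) * (qPoch sb q t * (1 - sb*q^t)) *
        (qPoch (-sb) q t * (1 - -sb*q^t)) * (qPoch (q^(n+1)*b) q t * (1 - q^(n+1)*b*q^t)) *
        ((∏ i, qPoch (q*b/A i) q t) * (∏ i, (1 - q*b/A i*q^t)))
      = (qPoch q q t * qPoch sb q t * qPoch (-sb) q t * qPoch (q^(n+1)*b) q t *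
          (∏ i, qPoch (q*b/A i) q t)) *
        ((1 - q*q^t) * (1 - sb*q^t) * (1 - -sb*q^t) * (1 - q^(n+1)*b*q^t) *
          (∏ i, (1 - q*b/A i*q^t))) from by ring, h0, mul_zero]
  have hfacS : ∀ t, t < n → (1 - q*q^t) * (1 - sb'*q^t) * (1 - -sb'*q^t) *
      (1 - q^(n+1)*(1/(q^n*q^n*b))*q^t) * (∏ i, (1 - q*(1/(q^n*q^n*b))/A' i*q^t)) ≠ 0 := by
    intro t ht h0
    refine hdS (t+1) (by omega) ?_
    simp only [qPoch_succ, Finset.prod_mul_distrib]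
    rw [show (qPoch q q t * (1 - q*q^t)) * (qPoch sb' q t * (1 - sb'*q^t)) *
        (qPoch (-sb') q t * (1 - -sb'*q^t)) *
        (qPoch (q^(n+1)*(1/(q^n*q^n*b))) q t * (1 - q^(n+1)*(1/(q^n*q^n*b))*q^t)) *
        ((∏ i, qPoch (q*(1/(q^n*q^n*b))/A' i) q t) * (∏ i, (1 - q*(1/(q^n*q^n*b))/A' i*q^t)))
      = (qPoch q q t * qPoch sb' q t * qPoch (-sb') q t * qPoch (q^(n+1)*(1/(q^n*q^n*b))) q t *
          (∏ i, qPoch (q*(1/(q^n*q^n*b))/A' i) q t)) *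
        ((1 - q*q^t) * (1 - sb'*q^t) * (1 - -sb'*q^t) * (1 - q^(n+1)*(1/(q^n*q^n*b))*q^t) *
          (∏ i, (1 - q*(1/(q^n*q^n*b))/A' i*q^t))) from by ring, h0, mul_zero]
  have claim : ∀ j, j ≤ n → Lterm n m q z b sb (1/q^n) A (n-j)
      = Lterm n m q z b sb (1/q^n) A n *
        Lterm n m q (q^(2*n+m)*b^m/((∏ i, A i)^2*z)) (1/(q^n*q^n*b)) sb' (1/q^n) A' j := by
    intro j
    induction j with
    | zero => intro _; rw [Nat.sub_zero, Lterm_zero, mul_one]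
    | succ j ih =>
      intro hj1
      have hj : j ≤ n := by omega
      have hk1 : n - j = (n - (j+1)) + 1 := by omega
      set k := n - (j+1) with hkdef
      have hjk : j + k + 1 = n := by omega
      have IH := ih hj
      rw [hk1, Lterm_succ] at IH
      rw [Lterm_succ]
      simp only [hA'] at IH ⊢
      have hsb'' : sb' ^ 2 = 1/(q^(j+k+1)*q^(j+k+1)*b) := by rw [hjk]; exact hsb'
      have hfL := hfacL k (by omega)
      rw [← hjk] at hfL
      have hfS0 := hfacS j (by omega)
      simp only [hA'] at hfS0
      rw [← hjk] at hfS0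
      have hcross := cross m j k q z b sb sb' A hq hb hz hA hsb hsb'' hfL hfS0
      rw [hjk] at hcross
      linear_combination
        ((q^(2*n+m)*b^m/((∏ i, A i)^2*z)) *
          ((1 - 1/q^n*q^j) * (1 - 1/(q^n*q^n*b)*q^j) * (1 - q*sb'*q^j) * (1 - -(q*sb')*q^j) *
            ∏ i, (1 - A i/(q^n*b)*q^j)) /
          ((1 - q*q^j) * (1 - sb'*q^j) * (1 - -sb'*q^j) * (1 - q^(n+1)*(1/(q^n*q^n*b))*q^j) *
            ∏ i, (1 - q*(1/(q^n*q^n*b))/(A i/(q^n*b))*q^j))) * IH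
        - (Lterm n m q z b sb (1/q^n) A k) * hcross
  rw [Finset.mul_sum, ← Finset.sum_range_reflect (fun k => Lterm n m q z b sb (1/q^n) A k) (n+1)]
  refine Finset.sum_congr rfl fun j hj => ?_
  have hj' : j ≤ n := by have := Finset.mem_range.1 hj; omega
  rw [show n + 1 - 1 - j = n - j by omega]
  exact claim j hj' 

lemma qPoch_rev (q : ℂ) (hq : q ≠ 0) (n : ℕ) :
    qPoch q q n = (-1)^n * q^(n.choose 2 + n) * qPoch (1/q^n) q n := by
  have hgauss : (∑ i ∈ range n, i) = n.choose 2 := by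
    have h1 := Finset.sum_range_id_mul_two n
    have h2 := Nat.choose_two_right n
    omega
  have h1 : qPoch (1/q^n) q n
      = (∏ j ∈ range n, -(1/q^n * q^j)) * ∏ j ∈ range n, (1 - q * q^(n-1-j)) := by
    rw [← Finset.prod_mul_distrib]
    refine Finset.prod_congr rfl fun j hj => ?_
    have hj' : j < n := mem_range.1 hj
    refine flip_fact ?_
    rw [one_div, mul_assoc, show q ^ j * (q * q ^ (n-1-j)) = q ^ n from by
      rw [← pow_succ', ← pow_add]; congr 1; omega]
    exact inv_mul_cancel₀ (pow_ne_zero n hq)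
  have h2 : ∏ j ∈ range n, (1 - q * q^(n-1-j)) = qPoch q q n := by
    rw [show qPoch q q n = ∏ j ∈ range n, (1 - q * q^j) from rfl,
        ← Finset.prod_range_reflect (fun j => 1 - q * q^j) n]
  have h3 : (∏ j ∈ range n, -(1/q^n * q^j)) = (-1)^n * (1/q^n)^n * q^(n.choose 2) := by
    calc (∏ j ∈ range n, -(1/q^n * q^j)) = ∏ j ∈ range n, ((-(1/q^n)) * q^j) := by
          refine Finset.prod_congr rfl fun j _ => by ring
      _ = (-(1/q^n))^n * ∏ j ∈ range n, q^j := by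
          rw [Finset.prod_mul_distrib, Finset.prod_const, card_range]
      _ = (-1)^n * (1/q^n)^n * q^(n.choose 2) := by
          rw [Finset.prod_pow_eq_pow_sum, neg_pow, hgauss]
  rw [h1, h2, h3]
  have hch : n.choose 2 + (n.choose 2 + n) = n * n := by
    have h1 := Finset.sum_range_id_mul_two n
    have h2 := Nat.choose_two_right n
    have h3 : n * (n-1) + n = n * n := by
      cases n with
      | zero => simp
      | succ k => simp [Nat.succ_sub_one]; ring
    omega
  have hiv : (1/q^n)^n * (q^(n.choose 2) * q^(n.choose 2 + n)) = 1 := by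
    rw [one_div, inv_pow, ← pow_mul, ← pow_add, hch]
    exact inv_mul_cancel₀ (pow_ne_zero _ hq)
  have hs : ((-1:ℂ))^n * ((-1:ℂ))^n = 1 := by rw [← mul_pow]; norm_num
  linear_combination (-(qPoch q q n * ((-1:ℂ))^n * ((-1:ℂ))^n)) * hiv - qPoch q q n * hs

/-- Inversion of a terminating very-well-poised series `₍r+1₎W_r`.
Here `a : Fin (r-3) → ℂ` lists the parameters `a₅, …, a_{r+1}`, `sb` is the fixed
square root of `b`, and `sb'` the fixed square root of `q^{-2n}/b` used on the
right-hand side. -/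
theorem inversion_very_well_poised (n r : ℕ) (hr : 4 ≤ r) (q z b sb sb' : ℂ)
    (a : Fin (r - 3) → ℂ)
    (hq : q ≠ 0) (hq1 : ‖q‖ ≠ 1) (hz : z ≠ 0) (hb : b ≠ 0)
    (ha : ∀ i, a i ≠ 0)
    (hsb : sb ^ 2 = b) (hsb' : sb' ^ 2 = q ^ (-2 * (n : ℤ)) / b)
    (hden : ∀ x ∈ ([q, sb, -sb, q ^ (n + 1) * b] ++
        (List.ofFn fun i => q * b / a i) ++
        [sb', -sb', q ^ (n + 1) * (q ^ (-2 * (n : ℤ)) / b)] ++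
        (List.ofFn fun i => q * (q ^ (-2 * (n : ℤ)) / b) / (q ^ (-(n : ℤ)) * a i / b))),
      ∀ k ≤ n, qPoch x q k ≠ 0) :
    phi n ([b, q * sb, -(q * sb)] ++ List.ofFn a)
      ([sb, -sb, q ^ (n + 1) * b] ++ List.ofFn fun i => q * b / a i) q z
    = q ^ (-(n.choose 2 : ℤ)) * (-z / q) ^ n *
        ((qPoch (q * sb) q n * qPoch (-(q * sb)) q n * qPoch b q n *
            ∏ i, qPoch (a i) q n) /
          (qPoch sb q n * qPoch (-sb) q n * qPoch (q ^ (n + 1) * b) q n *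
            ∏ i, qPoch (q * b / a i) q n)) *
        phi n ([q ^ (-2 * (n : ℤ)) / b, q * sb', -(q * sb')] ++
            List.ofFn fun i => q ^ (-(n : ℤ)) * a i / b)
          ([sb', -sb', q ^ (n + 1) * (q ^ (-2 * (n : ℤ)) / b)] ++
            List.ofFn fun i => q * (q ^ (-2 * (n : ℤ)) / b) / (q ^ (-(n : ℤ)) * a i / b)) q
          (q ^ (2 * (n : ℤ) + r - 3) * b ^ ((r : ℤ) - 3) / ((∏ i, a i) ^ 2 * z)) := by
  -- hden extraction
  have hden_q : ∀ t ≤ n, qPoch q q t ≠ 0 := hden q (by simp)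
  have hden_sb : ∀ t ≤ n, qPoch sb q t ≠ 0 := hden sb (by simp)
  have hden_msb : ∀ t ≤ n, qPoch (-sb) q t ≠ 0 := hden (-sb) (by simp)
  have hden_q1b : ∀ t ≤ n, qPoch (q^(n+1)*b) q t ≠ 0 := hden (q^(n+1)*b) (by simp)
  have hden_f1 : ∀ i, ∀ t ≤ n, qPoch (q*b/a i) q t ≠ 0 := fun i =>
    hden (q*b/a i) (by simp only [List.mem_append, List.mem_ofFn]
                       exact Or.inl (Or.inl (Or.inr ⟨i, rfl⟩)))
  have hden_sb' : ∀ t ≤ n, qPoch sb' q t ≠ 0 := hden sb' (by simp)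
  have hden_msb' : ∀ t ≤ n, qPoch (-sb') q t ≠ 0 := hden (-sb') (by simp)
  have hden_q1b' : ∀ t ≤ n, qPoch (q^(n+1)*(q^(-2*(n:ℤ))/b)) q t ≠ 0 :=
    hden (q^(n+1)*(q^(-2*(n:ℤ))/b)) (by simp)
  have hden_f2 : ∀ i, ∀ t ≤ n, qPoch (q*(q^(-2*(n:ℤ))/b)/(q^(-(n:ℤ))*a i/b)) q t ≠ 0 := fun i =>
    hden _ (by simp only [List.mem_append, List.mem_ofFn]
               exact Or.inr ⟨i, rfl⟩)
  -- conversions to "solved forms"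
  have hQNc : q ^ (-(n:ℤ)) = 1/q^n := by rw [zpow_neg, zpow_natCast, one_div]
  have hb'c : q ^ (-2*(n:ℤ))/b = 1/(q^n*q^n*b) := by
    rw [show (-2*(n:ℤ)) = -((n:ℤ)+(n:ℤ)) by ring, zpow_neg, zpow_add₀ hq, zpow_natCast]
    rw [div_eq_div_iff hb (mul_ne_zero (mul_ne_zero (pow_ne_zero _ hq) (pow_ne_zero _ hq)) hb)]
    field_simp
  have hA'c : ∀ i, q^(-(n:ℤ))*a i/b = a i/(q^n*b) := fun i => by
    rw [hQNc, one_div_mul_eq_div, div_div]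
  have hz'c : q^(2*(n:ℤ)+r-3)*b^((r:ℤ)-3)/((∏ i, a i)^2*z)
      = q^(2*n+(r-3))*b^(r-3)/((∏ i, a i)^2*z) := by
    rw [show (2*(n:ℤ)+r-3) = ((2*n+(r-3):ℕ):ℤ) by omega, zpow_natCast,
        show ((r:ℤ)-3) = (((r-3):ℕ):ℤ) by omega, zpow_natCast]
  have hsb'c : sb'^2 = 1/(q^n*q^n*b) := by rw [hsb', hb'c]
  -- phi unfolding
  have hphiL : phi n ([b, q*sb, -(q*sb)] ++ List.ofFn a)
      ([sb, -sb, q^(n+1)*b] ++ List.ofFn fun i => q*b/a i) q z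
      = ∑ k ∈ range (n+1), Lterm n (r-3) q z b sb (q^(-(n:ℤ))) a k := by
    unfold phi Lterm
    refine Finset.sum_congr rfl fun k _ => ?_
    simp only [List.map_cons, List.map_append, List.map_ofFn, List.prod_cons, List.prod_append,
      List.prod_ofFn, Function.comp, List.map_nil, List.prod_nil]
    ring
  have hphiS : phi n ([q^(-2*(n:ℤ))/b, q*sb', -(q*sb')] ++ List.ofFn fun i => q^(-(n:ℤ))*a i/b)
      ([sb', -sb', q^(n+1)*(q^(-2*(n:ℤ))/b)] ++
        List.ofFn fun i => q*(q^(-2*(n:ℤ))/b)/(q^(-(n:ℤ))*a i/b)) q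
      (q^(2*(n:ℤ)+r-3)*b^((r:ℤ)-3)/((∏ i, a i)^2*z))
      = ∑ k ∈ range (n+1), Lterm n (r-3) q (q^(2*(n:ℤ)+r-3)*b^((r:ℤ)-3)/((∏ i, a i)^2*z))
          (q^(-2*(n:ℤ))/b) sb' (q^(-(n:ℤ))) (fun i => q^(-(n:ℤ))*a i/b) k := by
    unfold phi Lterm
    refine Finset.sum_congr rfl fun k _ => ?_
    simp only [List.map_cons, List.map_append, List.map_ofFn, List.prod_cons, List.prod_append,
      List.prod_ofFn, Function.comp, List.map_nil, List.prod_nil]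
    ring
  have hdLprod : ∀ t, t ≤ n → qPoch q q t * qPoch sb q t * qPoch (-sb) q t *
      qPoch (q^(n+1)*b) q t * (∏ i, qPoch (q*b/a i) q t) ≠ 0 := fun t ht =>
    mul_ne_zero (mul_ne_zero (mul_ne_zero (mul_ne_zero (hden_q t ht) (hden_sb t ht))
      (hden_msb t ht)) (hden_q1b t ht)) (Finset.prod_ne_zero_iff.2 fun i _ => hden_f1 i t ht)
  have hdSprod : ∀ t, t ≤ n → qPoch q q t * qPoch sb' q t * qPoch (-sb') q t *
      qPoch (q^(n+1)*(q^(-2*(n:ℤ))/b)) q t *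
      (∏ i, qPoch (q*(q^(-2*(n:ℤ))/b)/(q^(-(n:ℤ))*a i/b)) q t) ≠ 0 := fun t ht =>
    mul_ne_zero (mul_ne_zero (mul_ne_zero (mul_ne_zero (hden_q t ht) (hden_sb' t ht))
      (hden_msb' t ht)) (hden_q1b' t ht)) (Finset.prod_ne_zero_iff.2 fun i _ => hden_f2 i t ht)
  have haux := aux n (r-3) q z (q^(2*(n:ℤ)+r-3)*b^((r:ℤ)-3)/((∏ i, a i)^2*z)) b sb
    (q^(-2*(n:ℤ))/b) sb' (q^(-(n:ℤ))) a (fun i => q^(-(n:ℤ))*a i/b)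
    hq hb hz ha hsb hsb'c hQNc hb'c (fun i => hA'c i) hz'c hdLprod hdSprod
  rw [hphiL, hphiS, haux]
  congr 1
  unfold Lterm
  rw [hQNc, qPoch_rev q hq n,
    show q^(-(n.choose 2:ℤ)) = 1/q^(n.choose 2) from by rw [zpow_neg, zpow_natCast, one_div],
    div_pow, neg_pow z n]
  have hPq := hden_q n le_rfl
  rw [qPoch_rev q hq n] at hPq
  have hP1n : qPoch (1/q^n) q n ≠ 0 := fun h => hPq (by rw [mul_comm, h, zero_mul])
  have hD2 : qPoch sb q n * qPoch (-sb) q n * qPoch (q^(n+1)*b) q n *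
      ∏ i, qPoch (q*b/a i) q n ≠ 0 :=
    mul_ne_zero (mul_ne_zero (mul_ne_zero (hden_sb n le_rfl) (hden_msb n le_rfl))
      (hden_q1b n le_rfl)) (Finset.prod_ne_zero_iff.2 fun i _ => hden_f1 i n le_rfl)
  have hB : (-1:ℂ)^n * q^(n.choose 2 + n) * qPoch (1/q^n) q n * qPoch sb q n * qPoch (-sb) q n *
      qPoch (q^(n+1)*b) q n * ∏ i, qPoch (q*b/a i) q n ≠ 0 :=
    mul_ne_zero (mul_ne_zero (mul_ne_zero (mul_ne_zero (mul_ne_zero (mul_ne_zero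
      (pow_ne_zero n (neg_ne_zero.2 one_ne_zero)) (pow_ne_zero _ hq)) hP1n)
      (hden_sb n le_rfl)) (hden_msb n le_rfl)) (hden_q1b n le_rfl))
      (Finset.prod_ne_zero_iff.2 fun i _ => hden_f1 i n le_rfl)
  rw [mul_div_assoc', div_eq_div_iff hB hD2]
  have hcW : 1/q^(n.choose 2) * (1/q^n) * q^(n.choose 2 + n) = 1 := by
    rw [pow_add]; field_simp
  have hs : ((-1:ℂ))^n*((-1:ℂ))^n = 1 := by rw [← mul_pow]; norm_num
  linear_combination (-(z^n * qPoch (1/q^n) q n *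
      (qPoch b q n * qPoch (q*sb) q n * qPoch (-(q*sb)) q n * ∏ i, qPoch (a i) q n) *
      (qPoch sb q n * qPoch (-sb) q n * qPoch (q^(n+1)*b) q n * ∏ i, qPoch (q*b/a i) q n))) * hcW
    - (z^n * qPoch (1/q^n) q n *
      (qPoch b q n * qPoch (q*sb) q n * qPoch (-(q*sb)) q n * ∏ i, qPoch (a i) q n) *
      (qPoch sb q n * qPoch (-sb) q n * qPoch (q^(n+1)*b) q n * ∏ i, qPoch (q*b/a i) q n) *
      (1/q^(n.choose 2) * (1/q^n) * q^(n.choose 2 + n))) * hs
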